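/- An idealised conformity measure A is S-optimal if and only if it is N-optimal, if and only if it is OF-optimal, if and only if it is OE-optimal, if and only if it is a refinement of the CP idealised conformity measure; that is, O(S) = O(OF) = O(N) = O(OE) = R(CP). -/

import Mathlib

noncomputable section Conformal

open Finset

variable {X Y : Type*} [Fintype X] [Fintype Y] [DecidableEq Y]

/-- The p-value `p_A(x,y,τ) = Q{z : A z < A (x,y)} + τ·Q{z : A z = A (x,y)}`. -/
def pValue (Q A : X × Y → ℝ) (x : X) (y : Y) (τ : ℝ) : ℝ :=
  (∑ z : X × Y, if A z < A (x, y) then Q z else 0)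
    + τ * ∑ z : X × Y, if A z = A (x, y) then Q z else 0

/-- The prediction set `Γ_A^ε(x,τ) = {y : p_A(x,y,τ) > ε}`. -/
def predSet (Q A : X × Y → ℝ) (ε : ℝ) (x : X) (τ : ℝ) : Finset Y :=
  Finset.univ.filter fun y => ε < pValue Q A x y τ

/-- The marginal `Q_X` of `Q` on the object space. -/
def margX (Q : X × Y → ℝ) (x : X) : ℝ := ∑ y, Q (x, y)

/-- The marginal `Q_Y` of `Q` on the label space. -/
def margY (Q : X × Y → ℝ) (y : Y) : ℝ := ∑ x, Q (x, y)

/-- The conditional probability `Q(y|x)`; as a function of `z = (x,y)` this is the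
CP idealised conformity measure. -/
def condQ (Q : X × Y → ℝ) (z : X × Y) : ℝ := Q z / margX Q z.1

/-- Expectation `E_{x,τ}` with `x ~ Q_X` and `τ` uniform on `[0,1]`, independent. -/
def expXT (Q : X × Y → ℝ) (g : X → ℝ → ℝ) : ℝ :=
  ∑ x, margX Q x * ∫ τ in (0:ℝ)..1, g x τ

/-- Expectation `E_{(x,y),τ}` with `(x,y) ~ Q` and `τ` uniform on `[0,1]`, independent. -/
def expZT (Q : X × Y → ℝ) (g : X × Y → ℝ → ℝ) : ℝ :=
  ∑ z, Q z * ∫ τ in (0:ℝ)..1, g z τ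

open Classical in
/-- Probability `Prob_{x,τ}` with `x ~ Q_X` and `τ` uniform on `[0,1]`, independent. -/
def probXT (Q : X × Y → ℝ) (P : X → ℝ → Prop) : ℝ :=
  expXT Q fun x τ => if P x τ then 1 else 0

open Classical in
/-- Probability `Prob_{(x,y),τ}` with `(x,y) ~ Q` and `τ` uniform on `[0,1]`, independent. -/
def probZT (Q : X × Y → ℝ) (P : X × Y → ℝ → Prop) : ℝ :=
  expZT Q fun z τ => if P z τ then 1 else 0

/-- `A` is a refinement of `B`. -/
def Refines (A B : X × Y → ℝ) : Prop :=
  ∀ z1 z2 : X × Y, B z1 < B z2 → A z1 < A z2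

/-- `max_{y' ≠ y} p_A(x,y',τ)`. -/
def maxOther (Q A : X × Y → ℝ) (x : X) (y : Y) (τ : ℝ) : ℝ :=
  ⨆ y' : {y' : Y // y' ≠ y}, pValue Q A x y'.1 τ

/-- The unconfidence `min_y max_{y' ≠ y} p_A(x,y',τ)`. -/
def unconf (Q A : X × Y → ℝ) (x : X) (τ : ℝ) : ℝ := ⨅ y : Y, maxOther Q A x y τ

/-- The credibility `max_y p_A(x,y,τ)`. -/
def maxPV (Q A : X × Y → ℝ) (x : X) (τ : ℝ) : ℝ := ⨆ y : Y, pValue Q A x y τ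

/-- The predictability `f(x) = max_y Q(y|x)`. -/
def predictability (Q : X × Y → ℝ) (x : X) : ℝ := ⨆ y : Y, condQ Q (x, y)

/-- `c` is a choice function: `Q(c x | x) = f(x)` for all `x`. -/
def IsChoiceFun (Q : X × Y → ℝ) (c : X → Y) : Prop :=
  ∀ x, condQ Q (x, c x) = predictability Q x

/-- The signed predictability (SP) idealised conformity measure corresponding to `c`. -/
def SPMeasure (Q : X × Y → ℝ) (c : X → Y) : X × Y → ℝ := fun z =>
  if z.2 = c z.1 then predictability Q z.1 else -predictability Q z.1

/-- The modified conditional probability (MCP) idealised conformity measure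
corresponding to `c`. -/
def MCPMeasure (Q : X × Y → ℝ) (c : X → Y) : X × Y → ℝ := fun z =>
  if z.2 = c z.1 then condQ Q z else condQ Q z - 1

/-- The modified signed predictability (MSP) idealised conformity measure
(independent of the choice function: `y = ŷ(x)` iff `Q(y|x) = f(x)` when `f(x) > 1/2`). -/
def MSPMeasure (Q : X × Y → ℝ) : X × Y → ℝ := fun z =>
  if 1 / 2 < predictability Q z.1 then
    if condQ Q z = predictability Q z.1 then predictability Q z.1
    else -predictability Q z.1
  else 0

/-- S-optimality. -/
def SOpt (Q A : X × Y → ℝ) : Prop :=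
  ∀ B : X × Y → ℝ,
    expXT Q (fun x τ => ∑ y, pValue Q A x y τ)
      ≤ expXT Q (fun x τ => ∑ y, pValue Q B x y τ)

/-- N-optimality. -/
def NOpt (Q A : X × Y → ℝ) : Prop :=
  ∀ B : X × Y → ℝ, ∀ ε ∈ Set.Ioo (0:ℝ) 1,
    expXT Q (fun x τ => ((predSet Q A ε x τ).card : ℝ))
      ≤ expXT Q (fun x τ => ((predSet Q B ε x τ).card : ℝ))

/-- OF-optimality. -/
def OFOpt (Q A : X × Y → ℝ) : Prop :=
  ∀ B : X × Y → ℝ,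
    expZT Q (fun z τ => ∑ y' ∈ Finset.univ.erase z.2, pValue Q A z.1 y' τ)
      ≤ expZT Q (fun z τ => ∑ y' ∈ Finset.univ.erase z.2, pValue Q B z.1 y' τ)

/-- OE-optimality. -/
def OEOpt (Q A : X × Y → ℝ) : Prop :=
  ∀ B : X × Y → ℝ, ∀ ε ∈ Set.Ioo (0:ℝ) 1,
    expZT Q (fun z τ => (((predSet Q A ε z.1 τ).erase z.2).card : ℝ))
      ≤ expZT Q (fun z τ => (((predSet Q B ε z.1 τ).erase z.2).card : ℝ))

/-- U-optimality. -/
def UOpt (Q A : X × Y → ℝ) : Prop :=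
  ∀ B : X × Y → ℝ,
    expXT Q (unconf Q A) < expXT Q (unconf Q B) ∨
      (expXT Q (unconf Q A) = expXT Q (unconf Q B) ∧
        expXT Q (maxPV Q A) ≤ expXT Q (maxPV Q B))

/-- M-optimality. -/
def MOpt (Q A : X × Y → ℝ) : Prop :=
  ∀ B : X × Y → ℝ, ∀ ε ∈ Set.Ioo (0:ℝ) 1,
    probXT Q (fun x τ => 1 < (predSet Q A ε x τ).card)
        < probXT Q (fun x τ => 1 < (predSet Q B ε x τ).card) ∨
      (probXT Q (fun x τ => 1 < (predSet Q A ε x τ).card)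
          = probXT Q (fun x τ => 1 < (predSet Q B ε x τ).card) ∧
        probXT Q (fun x τ => (predSet Q B ε x τ).card = 0)
          ≤ probXT Q (fun x τ => (predSet Q A ε x τ).card = 0))

/-- F-optimality. -/
def FOpt (Q A : X × Y → ℝ) : Prop :=
  ∀ B : X × Y → ℝ,
    expXT Q (fun x τ => (∑ y, pValue Q A x y τ) - maxPV Q A x τ)
        < expXT Q (fun x τ => (∑ y, pValue Q B x y τ) - maxPV Q B x τ) ∨
      (expXT Q (fun x τ => (∑ y, pValue Q A x y τ) - maxPV Q A x τ)
          = expXT Q (fun x τ => (∑ y, pValue Q B x y τ) - maxPV Q B x τ) ∧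
        expXT Q (maxPV Q A) ≤ expXT Q (maxPV Q B))

/-- E-optimality. -/
def EOpt (Q A : X × Y → ℝ) : Prop :=
  ∀ B : X × Y → ℝ, ∀ ε ∈ Set.Ioo (0:ℝ) 1,
    expXT Q (fun x τ => max (((predSet Q A ε x τ).card : ℝ) - 1) 0)
        < expXT Q (fun x τ => max (((predSet Q B ε x τ).card : ℝ) - 1) 0) ∨
      (expXT Q (fun x τ => max (((predSet Q A ε x τ).card : ℝ) - 1) 0)
          = expXT Q (fun x τ => max (((predSet Q B ε x τ).card : ℝ) - 1) 0) ∧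
        probXT Q (fun x τ => (predSet Q B ε x τ).card = 0)
          ≤ probXT Q (fun x τ => (predSet Q A ε x τ).card = 0))

/-- OU-optimality. -/
def OUOpt (Q A : X × Y → ℝ) : Prop :=
  ∀ B : X × Y → ℝ,
    expZT Q (fun z τ => maxOther Q A z.1 z.2 τ)
      ≤ expZT Q (fun z τ => maxOther Q B z.1 z.2 τ)

/-- OM-optimality. -/
def OMOpt (Q A : X × Y → ℝ) : Prop :=
  ∀ B : X × Y → ℝ, ∀ ε ∈ Set.Ioo (0:ℝ) 1,
    probZT Q (fun z τ => ((predSet Q A ε z.1 τ).erase z.2).Nonempty)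
      ≤ probZT Q (fun z τ => ((predSet Q B ε z.1 τ).erase z.2).Nonempty)

end Conformal

set_option linter.unusedSectionVars false

section ScalarLemmas
open MeasureTheory Set Finset


/-- integral of indicator of `(c, ∞)` over `[0,1]`. -/
lemma int_ind (c : ℝ) : ∫ τ in (0:ℝ)..1, (if c < τ then (1:ℝ) else 0)
    = min 1 (max 0 (1 - c)) := by
  have h1 : (fun τ : ℝ => if c < τ then (1:ℝ) else 0)
      = fun τ => Set.indicator (Set.Ioi c) (fun _ => (1:ℝ)) τ := by
    funext τ
    by_cases h : c < τ <;> simp [Set.indicator, h]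
  rw [intervalIntegral.integral_of_le (by norm_num : (0:ℝ) ≤ 1), h1]
  rw [MeasureTheory.setIntegral_indicator measurableSet_Ioi]
  rw [MeasureTheory.setIntegral_const]
  have h2 : Set.Ioc (0:ℝ) 1 ∩ Set.Ioi c = Set.Ioc (max 0 c) 1 :=
    Set.Ioc_inter_Ioi
  rw [h2, measureReal_def, Real.volume_Ioc, smul_eq_mul, mul_one]
  rcases le_total c 0 with h | h
  · rw [max_eq_left h, ENNReal.toReal_ofReal (by norm_num)]
    rw [max_eq_right (by linarith), min_eq_left (by linarith)]
    norm_num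
  · rw [max_eq_right h]
    rcases le_total c 1 with h' | h'
    · rw [ENNReal.toReal_ofReal (by linarith), max_eq_right (by linarith),
        min_eq_right (by linarith)]
    · rw [ENNReal.ofReal_eq_zero.2 (by linarith), ENNReal.toReal_zero,
        max_eq_left (by linarith), min_eq_right (by norm_num)]

noncomputable def gval (L M ε : ℝ) : ℝ :=
  if M = 0 then (if ε < L then 1 else 0) else min 1 (max 0 ((L + M - ε)/M))

lemma gval_int (L M ε : ℝ) (hM : 0 ≤ M) :
    ∫ τ in (0:ℝ)..1, (if ε < L + τ * M then (1:ℝ) else 0) = gval L M ε := by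
  rcases eq_or_lt_of_le hM with h | h
  · simp [gval, ← h]
  · have hne : M ≠ 0 := ne_of_gt h
    have : (fun τ : ℝ => if ε < L + τ * M then (1:ℝ) else 0)
        = fun τ => if (ε - L)/M < τ then (1:ℝ) else 0 := by
      funext τ
      congr 1
      rw [div_lt_iff₀ h, eq_iff_iff]
      constructor <;> intro <;> nlinarith
    rw [this, int_ind, gval, if_neg hne]
    congr 2
    field_simp
    ring

lemma gval_nonneg (L M ε : ℝ) : 0 ≤ gval L M ε := by
  unfold gval; split_ifs <;> simp

lemma gval_le_one (L M ε : ℝ) : gval L M ε ≤ 1 := by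
  unfold gval; split_ifs <;> simp

lemma gval_lt_one (L M ε : ℝ) (hM : 0 ≤ M) (h : gval L M ε < 1) : L ≤ ε := by
  unfold gval at h
  split_ifs at h with h0 h1
  · linarith
  · exact le_of_not_gt h1
  · have hM' : 0 < M := lt_of_le_of_ne hM (fun hh => h0 hh.symm)
    by_contra hc
    push_neg at hc
    have h1 : (1:ℝ) ≤ (L + M - ε)/M := by
      rw [le_div_iff₀ hM']; nlinarith
    have h2 : min 1 (max 0 ((L + M - ε)/M)) = 1 :=
      min_eq_left (le_trans h1 (le_max_right 0 _))
    rw [h2] at h; linarith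

lemma gval_zero_of (L M ε : ℝ) (hM : 0 ≤ M) (h : L + M ≤ ε) : gval L M ε = 0 := by
  unfold gval
  split_ifs with h0 h1
  · exfalso; rw [h0] at h; linarith
  · rfl
  · have hM' : 0 < M := lt_of_le_of_ne hM (fun hh => h0 hh.symm)
    rw [max_eq_left (div_nonpos_iff.mpr (Or.inr ⟨by linarith, hM⟩))]
    exact min_eq_right (zero_le_one)

lemma gval_pos (L M ε : ℝ) (hM : 0 ≤ M) (h : 0 < gval L M ε) : ε < L + M := by
  by_contra hc; push_neg at hc
  rw [gval_zero_of L M ε hM hc] at h; linarith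

lemma gval_mul (L M ε : ℝ) (hM : 0 ≤ M) :
    M * gval L M ε = max (L + M - ε) 0 - max (L - ε) 0 := by
  rcases eq_or_lt_of_le hM with h | h
  · rw [← h]; simp
  · rw [gval, if_neg (ne_of_gt h)]
    rcases le_total (L + M - ε) 0 with h1 | h1
    · rw [max_eq_left (div_nonpos_iff.mpr (Or.inr ⟨h1, hM⟩)), min_eq_right zero_le_one,
        max_eq_right h1, max_eq_right (by linarith : L - ε ≤ (0:ℝ))]
      ring
    · rcases le_total 0 (L - ε) with h2 | h2
      · have hr1 : (1:ℝ) ≤ (L + M - ε)/M := by rw [le_div_iff₀ h]; nlinarith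
        rw [max_eq_right (le_trans zero_le_one hr1), min_eq_left hr1,
          max_eq_left h1, max_eq_left h2]
        ring
      · have hr0 : 0 ≤ (L + M - ε)/M := div_nonneg h1 h.le
        have hr1 : (L + M - ε)/M ≤ 1 := by rw [div_le_one h]; linarith
        rw [max_eq_right hr0, min_eq_right hr1, max_eq_left h1,
          max_eq_right h2, sub_zero]
        field_simp

lemma gval_anti (L M : ℝ) (hM : 0 ≤ M) : Antitone (gval L M) := by
  intro a b hab
  unfold gval
  split_ifs with h0 h1 h2
  · exact le_refl 1
  · exfalso; exact h2 (lt_of_le_of_lt hab h1)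
  · exact zero_le_one
  · exact le_refl 0
  · have hM' : 0 < M := lt_of_le_of_ne hM (fun hh => h0 hh.symm)
    gcongr

lemma int_ind2 (c : ℝ) (h0 : 0 ≤ c) (h1 : c ≤ 1) :
    ∫ ε in (0:ℝ)..1, (if ε < c then (1:ℝ) else 0) = c := by
  have h1' : (fun ε : ℝ => if ε < c then (1:ℝ) else 0)
      = fun ε => Set.indicator (Set.Iio c) (fun _ => (1:ℝ)) ε := by
    funext τ; by_cases h : τ < c <;> simp [Set.indicator, h]
  rw [intervalIntegral.integral_of_le (by norm_num : (0:ℝ) ≤ 1), h1',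
    MeasureTheory.setIntegral_indicator measurableSet_Iio,
    MeasureTheory.setIntegral_const]
  have h2 : Set.Ioc (0:ℝ) 1 ∩ Set.Iio c = Set.Ioo 0 c := by
    ext x
    simp only [Set.mem_inter_iff, Set.mem_Ioc, Set.mem_Iio, Set.mem_Ioo]
    constructor
    · rintro ⟨⟨a, b⟩, d⟩; exact ⟨a, d⟩
    · rintro ⟨a, b⟩; exact ⟨⟨a, by linarith⟩, b⟩
  rw [h2, measureReal_def, Real.volume_Ioo, smul_eq_mul, mul_one, ENNReal.toReal_ofReal (by linarith)]
  ring

lemma gval_integral (L M : ℝ) (hL : 0 ≤ L) (hM : 0 ≤ M) (hLM : L + M ≤ 1) :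
    ∫ ε in (0:ℝ)..1, gval L M ε = L + M / 2 := by
  have hint : ∀ a b : ℝ, IntervalIntegrable (gval L M) volume a b :=
    fun a b => (gval_anti L M hM).intervalIntegrable
  rcases eq_or_lt_of_le hM with h | h
  · rw [show (L + M/2) = L by rw [← h]; ring]
    rw [show gval L M = fun ε => if ε < L then (1:ℝ) else 0 by
      funext ε; rw [gval, if_pos h.symm]]
    exact int_ind2 L hL (by linarith)
  · have hMne : M ≠ 0 := ne_of_gt h
    have e1 : ∫ ε in (0:ℝ)..L, gval L M ε = L := by
      rw [intervalIntegral.integral_congr (g := fun _ => (1:ℝ)) ?_]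
      · rw [intervalIntegral.integral_const, smul_eq_mul, sub_zero, mul_one]
      · intro ε hε
        rw [Set.uIcc_of_le hL] at hε
        have h1 : (1:ℝ) ≤ (L + M - ε)/M := by
          rw [le_div_iff₀ h]; nlinarith [hε.2]
        rw [gval, if_neg hMne]
        exact min_eq_left (le_trans h1 (le_max_right 0 _))
    have e2 : ∫ ε in L..(L+M), gval L M ε = M/2 := by
      rw [intervalIntegral.integral_congr (g := fun ε => (L + M - ε)/M) ?_]
      · have : (fun ε : ℝ => (L + M - ε)/M) = fun ε => (L + M)/M - ε * (1/M) := by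
          funext ε; field_simp
        rw [this, intervalIntegral.integral_sub
            (continuous_const.intervalIntegrable _ _)
            ((show IntervalIntegrable (fun ε : ℝ => ε * (1/M)) volume L (L+M) from
              (continuous_id'.mul continuous_const).intervalIntegrable _ _)),
          intervalIntegral.integral_const, intervalIntegral.integral_mul_const,
          integral_id, smul_eq_mul]
        field_simp
        ring
      · intro ε hε
        rw [Set.uIcc_of_le (by linarith)] at hε
        have hr0 : 0 ≤ (L + M - ε)/M := div_nonneg (by linarith [hε.2]) h.le
        have hr1 : (L + M - ε)/M ≤ 1 := by rw [div_le_one h]; linarith [hε.1]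
        rw [gval, if_neg hMne, max_eq_right hr0, min_eq_right hr1]
    have e3 : ∫ ε in (L+M)..1, gval L M ε = 0 := by
      rw [intervalIntegral.integral_congr (g := fun _ => (0:ℝ)) ?_]
      · simp
      · intro ε hε
        rw [Set.uIcc_of_le (by linarith)] at hε
        exact gval_zero_of L M ε hM hε.1
    have s1 := intervalIntegral.integral_add_adjacent_intervals
      (hint 0 L) (hint L (L+M))
    have s2 := intervalIntegral.integral_add_adjacent_intervals
      (hint 0 (L+M)) (hint (L+M) 1)
    rw [← s2, ← s1, e1, e2, e3]
    ring

lemma tele (φ m : ℝ → ℝ) (V : Finset ℝ) :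
    ∑ a ∈ V, (φ (∑ b ∈ V.filter (· ≤ a), m b) - φ (∑ b ∈ V.filter (· < a), m b))
      = φ (∑ b ∈ V, m b) - φ 0 := by
  induction V using Finset.induction_on_max with
  | empty => simp
  | insert a s ha ih =>
    have hanotin : a ∉ s := fun h => lt_irrefl a (ha a h)
    rw [Finset.sum_insert hanotin]
    have h1 : (insert a s).filter (· ≤ a) = insert a s :=
      Finset.filter_true_of_mem (fun x hx => by
        rcases Finset.mem_insert.1 hx with h | h
        · exact le_of_eq h
        · exact le_of_lt (ha x h))
    have h2 : (insert a s).filter (· < a) = s := by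
      rw [Finset.filter_insert, if_neg (lt_irrefl a)]
      exact Finset.filter_true_of_mem (fun x hx => ha x hx)
    have h3 : ∀ b ∈ s,
        (φ (∑ c ∈ (insert a s).filter (· ≤ b), m c)
          - φ (∑ c ∈ (insert a s).filter (· < b), m c))
        = (φ (∑ c ∈ s.filter (· ≤ b), m c) - φ (∑ c ∈ s.filter (· < b), m c)) := by
      intro b hb
      rw [Finset.filter_insert, if_neg (not_le.2 (ha b hb)),
        Finset.filter_insert, if_neg (not_lt.2 (le_of_lt (ha b hb)))]
    rw [Finset.sum_congr rfl h3, ih, h1, h2, Finset.sum_insert hanotin]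
    ring

end ScalarLemmas

section Proofs
open Finset MeasureTheory Set

variable {X Y : Type*} [Fintype X] [Fintype Y] [DecidableEq Y]

noncomputable def lowQ (Q C : X × Y → ℝ) (w : X × Y) : ℝ :=
  ∑ z, if C z < C w then Q z else 0
noncomputable def eqQ (Q C : X × Y → ℝ) (w : X × Y) : ℝ :=
  ∑ z, if C z = C w then Q z else 0

lemma pValue_eq (Q C : X × Y → ℝ) (x : X) (y : Y) (τ : ℝ) :
    pValue Q C x y τ = lowQ Q C (x, y) + τ * eqQ Q C (x, y) := rfl

variable {Q C : X × Y → ℝ}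

lemma lowQ_nonneg (hQ0 : ∀ z, 0 ≤ Q z) (w : X × Y) : 0 ≤ lowQ Q C w :=
  Finset.sum_nonneg fun z _ => by split_ifs; exacts [hQ0 z, le_refl 0]

lemma eqQ_nonneg (hQ0 : ∀ z, 0 ≤ Q z) (w : X × Y) : 0 ≤ eqQ Q C w :=
  Finset.sum_nonneg fun z _ => by split_ifs; exacts [hQ0 z, le_refl 0]

lemma low_add_eq (w : X × Y) :
    lowQ Q C w + eqQ Q C w = ∑ z, if C z ≤ C w then Q z else 0 := by
  rw [lowQ, eqQ, ← Finset.sum_add_distrib]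
  apply Finset.sum_congr rfl
  intro z _
  rcases lt_trichotomy (C z) (C w) with h | h | h
  · rw [if_pos h, if_neg (ne_of_lt h), if_pos (le_of_lt h), add_zero]
  · rw [if_neg (lt_irrefl _ ∘ (h ▸ ·)), if_pos h, if_pos (le_of_eq h), zero_add]
  · rw [if_neg (asymm h), if_neg (ne_of_gt h), if_neg (not_le.2 h), add_zero]

lemma low_add_le_one (hQ0 : ∀ z, 0 ≤ Q z) (hQ1 : ∑ z : X × Y, Q z = 1) (w : X × Y) :
    lowQ Q C w + eqQ Q C w ≤ 1 := by
  rw [low_add_eq, ← hQ1]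
  apply Finset.sum_le_sum
  intro z _
  split_ifs
  · exact le_refl _
  · exact hQ0 z

lemma leQ_mono (hQ0 : ∀ z, 0 ≤ Q z) {w w' : X × Y} (h : C w < C w') :
    lowQ Q C w + eqQ Q C w ≤ lowQ Q C w' := by
  rw [low_add_eq, lowQ]
  apply Finset.sum_le_sum
  intro z _
  split_ifs with h1 h2 h2
  · exact le_refl _
  · exact absurd (lt_of_le_of_lt h1 h) h2
  · exact hQ0 z
  · exact le_refl _

noncomputable def kfun (a b : ℝ) : ℝ := if a < b then 1 else if a = b then 1/2 else 0

lemma kfun_nonneg (a b : ℝ) : 0 ≤ kfun a b := by unfold kfun; split_ifs <;> norm_num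
lemma kfun_le_one (a b : ℝ) : kfun a b ≤ 1 := by unfold kfun; split_ifs <;> norm_num
lemma kfun_lt {a b : ℝ} (h : a < b) : kfun a b = 1 := if_pos h
lemma kfun_eq {a b : ℝ} (h : a = b) : kfun a b = 1/2 := by
  rw [kfun, if_neg (by rw [h]; exact lt_irrefl _), if_pos h]
lemma kfun_gt {a b : ℝ} (h : b < a) : kfun a b = 0 := by
  rw [kfun, if_neg (asymm h), if_neg (ne_of_gt h)]
lemma kfun_add (a b : ℝ) : kfun a b + kfun b a = 1 := by
  rcases lt_trichotomy a b with h | h | h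
  · rw [kfun_lt h, kfun_gt h]; ring
  · rw [kfun_eq h, kfun_eq h.symm]; ring
  · rw [kfun_gt h, kfun_lt h]; ring

lemma pbar_eq (w : X × Y) :
    lowQ Q C w + eqQ Q C w / 2 = ∑ z, Q z * kfun (C z) (C w) := by
  rw [lowQ, eqQ, Finset.sum_div, ← Finset.sum_add_distrib]
  apply Finset.sum_congr rfl
  intro z _
  rcases lt_trichotomy (C z) (C w) with h | h | h
  · rw [if_pos h, if_neg (ne_of_lt h), kfun_lt h]; ring
  · rw [if_neg (by rw [h]; exact lt_irrefl _), if_pos h, kfun_eq h]; ring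
  · rw [if_neg (asymm h), if_neg (ne_of_gt h), kfun_gt h]; ring

noncomputable def Sval (Q C : X × Y → ℝ) : ℝ :=
  ∑ w : X × Y, margX Q w.1 * (lowQ Q C w + eqQ Q C w / 2)
noncomputable def Nval (Q C : X × Y → ℝ) (ε : ℝ) : ℝ :=
  ∑ w : X × Y, margX Q w.1 * gval (lowQ Q C w) (eqQ Q C w) ε
noncomputable def Uval (Q C : X × Y → ℝ) (ε : ℝ) : ℝ :=
  ∑ w : X × Y, Q w * gval (lowQ Q C w) (eqQ Q C w) ε

lemma int_pvalue (L M : ℝ) : ∫ τ in (0:ℝ)..1, (L + τ * M) = L + M / 2 := by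
  rw [intervalIntegral.integral_add intervalIntegrable_const
      (show IntervalIntegrable (fun τ : ℝ => τ * M) volume 0 1 from
        (continuous_id'.mul continuous_const).intervalIntegrable _ _),
    intervalIntegral.integral_const, intervalIntegral.integral_mul_const, integral_id]
  norm_num
  linarith

lemma sum_head (G : X → ℝ) :
    ∑ z : X × Y, Q z * G z.1 = ∑ x, margX Q x * G x := by
  rw [Fintype.sum_prod_type]
  apply Finset.sum_congr rfl
  intro x _
  trans (∑ y, Q (x, y) * G x)
  · exact Finset.sum_congr rfl fun y _ => rfl
  · rw [← Finset.sum_mul]; rfl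

lemma sum_margX (H : X × Y → ℝ) :
    ∑ w : X × Y, margX Q w.1 * H w = ∑ x, margX Q x * ∑ y, H (x, y) := by
  rw [Fintype.sum_prod_type]
  apply Finset.sum_congr rfl
  intro x _
  trans (∑ y, margX Q x * H (x, y))
  · exact Finset.sum_congr rfl fun y _ => rfl
  · exact (Finset.mul_sum _ _ _).symm

lemma pv_intable (x : X) (y : Y) :
    IntervalIntegrable (fun τ => pValue Q C x y τ) volume 0 1 :=
  (continuous_const.add (continuous_id'.mul continuous_const)).intervalIntegrable _ _

lemma expXT_S : expXT Q (fun x τ => ∑ y, pValue Q C x y τ) = Sval Q C := by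
  unfold expXT
  rw [Sval, sum_margX (H := fun w => lowQ Q C w + eqQ Q C w / 2)]
  apply Finset.sum_congr rfl
  intro x _
  show (margX Q x * ∫ τ in (0:ℝ)..1, ∑ y, pValue Q C x y τ)
    = margX Q x * ∑ y, (lowQ Q C (x, y) + eqQ Q C (x, y) / 2)
  congr 1
  rw [intervalIntegral.integral_finset_sum (fun y _ => pv_intable x y)]
  exact Finset.sum_congr rfl fun y _ => int_pvalue _ _

lemma card_predSet_real (ε : ℝ) (x : X) (τ : ℝ) :
    ((predSet Q C ε x τ).card : ℝ) = ∑ y, if ε < pValue Q C x y τ then (1:ℝ) else 0 := by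
  rw [predSet, Finset.card_filter]
  push_cast
  rfl

lemma mono_ind (L M ε : ℝ) (hM : 0 ≤ M) :
    Monotone (fun τ => if ε < L + τ * M then (1:ℝ) else 0) := by
  intro a b hab
  dsimp only
  split_ifs with h1 h2
  · exact le_refl _
  · exact absurd (lt_of_lt_of_le h1 (by nlinarith)) h2
  · norm_num
  · exact le_refl _

lemma pv_ind_intable (hQ0 : ∀ z, 0 ≤ Q z) (ε : ℝ) (x : X) (y : Y) :
    IntervalIntegrable (fun τ => if ε < pValue Q C x y τ then (1:ℝ) else 0) volume 0 1 :=
  (mono_ind (lowQ Q C (x, y)) (eqQ Q C (x, y)) ε (eqQ_nonneg hQ0 _)).intervalIntegrable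

lemma int_pv_ind (hQ0 : ∀ z, 0 ≤ Q z) (ε : ℝ) (x : X) (y : Y) :
    ∫ τ in (0:ℝ)..1, (if ε < pValue Q C x y τ then (1:ℝ) else 0)
      = gval (lowQ Q C (x, y)) (eqQ Q C (x, y)) ε :=
  gval_int _ _ _ (eqQ_nonneg hQ0 _)

lemma expXT_N (hQ0 : ∀ z, 0 ≤ Q z) (ε : ℝ) :
    expXT Q (fun x τ => ((predSet Q C ε x τ).card : ℝ)) = Nval Q C ε := by
  unfold expXT
  rw [Nval, sum_margX (H := fun w => gval (lowQ Q C w) (eqQ Q C w) ε)]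
  apply Finset.sum_congr rfl
  intro x _
  show (margX Q x * ∫ τ in (0:ℝ)..1, ((predSet Q C ε x τ).card : ℝ))
    = margX Q x * ∑ y, gval (lowQ Q C (x, y)) (eqQ Q C (x, y)) ε
  congr 1
  rw [show (fun τ => ((predSet Q C ε x τ).card : ℝ))
      = fun τ => ∑ y, if ε < pValue Q C x y τ then (1:ℝ) else 0 from
    funext fun τ => card_predSet_real ε x τ]
  rw [intervalIntegral.integral_finset_sum (fun y _ => pv_ind_intable hQ0 ε x y)]
  exact Finset.sum_congr rfl fun y _ => int_pv_ind hQ0 ε x y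

lemma Tval_half (hQ1 : ∑ z : X × Y, Q z = 1) :
    ∑ z : X × Y, Q z * (lowQ Q C z + eqQ Q C z / 2) = 1 / 2 := by
  have expand : ∑ z : X × Y, Q z * (lowQ Q C z + eqQ Q C z / 2)
      = ∑ z : X × Y, ∑ z' : X × Y, Q z * (Q z' * kfun (C z') (C z)) := by
    apply Finset.sum_congr rfl
    intro z _
    rw [pbar_eq, Finset.mul_sum]
  have hswap : ∑ z : X × Y, ∑ z' : X × Y, Q z * (Q z' * kfun (C z') (C z))
      = ∑ z : X × Y, ∑ z' : X × Y, Q z * (Q z' * kfun (C z) (C z')) := by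
    rw [Finset.sum_comm]
    apply Finset.sum_congr rfl; intro z _
    apply Finset.sum_congr rfl; intro z' _
    ring
  have htot : ∑ z : X × Y, ∑ z' : X × Y, Q z * (Q z' * kfun (C z') (C z))
      + ∑ z : X × Y, ∑ z' : X × Y, Q z * (Q z' * kfun (C z) (C z')) = 1 := by
    rw [← Finset.sum_add_distrib]
    have : ∀ z : X × Y, (∑ z' : X × Y, Q z * (Q z' * kfun (C z') (C z)))
        + ∑ z' : X × Y, Q z * (Q z' * kfun (C z) (C z')) = Q z * 1 := by
      intro z
      rw [← Finset.sum_add_distrib, ← hQ1, Finset.mul_sum]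
      apply Finset.sum_congr rfl
      intro z' _
      rw [← mul_one (Q z * Q z'), ← kfun_add (C z') (C z)]
      ring
    rw [Finset.sum_congr rfl fun z _ => this z]
    simp only [mul_one]
    exact hQ1
  rw [expand]
  linarith [hswap, htot]

lemma expZT_OF (hQ1 : ∑ z : X × Y, Q z = 1) :
    expZT Q (fun z τ => ∑ y' ∈ Finset.univ.erase z.2, pValue Q C z.1 y' τ)
      = Sval Q C - 1 / 2 := by
  unfold expZT
  have key : ∀ z : X × Y,
      (∫ τ in (0:ℝ)..1, ∑ y' ∈ Finset.univ.erase z.2, pValue Q C z.1 y' τ)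
      = (∑ y', (lowQ Q C (z.1, y') + eqQ Q C (z.1, y') / 2))
          - (lowQ Q C z + eqQ Q C z / 2) := by
    intro z
    rw [intervalIntegral.integral_finset_sum (fun y _ => pv_intable z.1 y)]
    have hpv : ∀ y' : Y, (∫ x in (0:ℝ)..1, pValue Q C z.1 y' x)
        = lowQ Q C (z.1, y') + eqQ Q C (z.1, y') / 2 := fun y' => int_pvalue _ _
    rw [Finset.sum_congr rfl fun y' _ => hpv y']
    rw [Finset.sum_erase_eq_sub (Finset.mem_univ z.2)]
  rw [Finset.sum_congr rfl fun z _ => by rw [key z]]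
  have split : ∑ z : X × Y, Q z * ((∑ y', (lowQ Q C (z.1, y') + eqQ Q C (z.1, y') / 2))
      - (lowQ Q C z + eqQ Q C z / 2))
      = (∑ z : X × Y, Q z * ∑ y', (lowQ Q C (z.1, y') + eqQ Q C (z.1, y') / 2))
        - ∑ z : X × Y, Q z * (lowQ Q C z + eqQ Q C z / 2) := by
    rw [← Finset.sum_sub_distrib]
    exact Finset.sum_congr rfl fun z _ => by ring
  rw [split, Tval_half hQ1,
    sum_head (fun x => ∑ y', (lowQ Q C (x, y') + eqQ Q C (x, y') / 2)),
    ← sum_margX (H := fun w => lowQ Q C w + eqQ Q C w / 2)]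
  rw [Sval]

lemma card_erase_real (s : Finset Y) (a : Y) :
    ((s.erase a).card : ℝ) = (s.card : ℝ) - (if a ∈ s then 1 else 0) := by
  by_cases h : a ∈ s
  · rw [if_pos h, Finset.card_erase_of_mem h,
      Nat.cast_sub (Finset.one_le_card.mpr ⟨a, h⟩)]
    norm_num
  · rw [if_neg h, Finset.erase_eq_of_notMem h]
    ring

lemma expZT_OE (hQ0 : ∀ z, 0 ≤ Q z) (ε : ℝ) :
    expZT Q (fun z τ => (((predSet Q C ε z.1 τ).erase z.2).card : ℝ))
      = Nval Q C ε - Uval Q C ε := by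
  unfold expZT
  have key : ∀ z : X × Y,
      (∫ τ in (0:ℝ)..1, (((predSet Q C ε z.1 τ).erase z.2).card : ℝ))
      = (∑ y, gval (lowQ Q C (z.1, y)) (eqQ Q C (z.1, y)) ε)
          - gval (lowQ Q C z) (eqQ Q C z) ε := by
    intro z
    have e : (fun τ => (((predSet Q C ε z.1 τ).erase z.2).card : ℝ))
        = fun τ => (∑ y ∈ Finset.univ.erase z.2,
            if ε < pValue Q C z.1 y τ then (1:ℝ) else 0) := by
      funext τ
      rw [predSet, ← Finset.filter_erase, Finset.card_filter]
      push_cast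
      rfl
    rw [e, intervalIntegral.integral_finset_sum (fun y _ => pv_ind_intable hQ0 ε z.1 y)]
    rw [Finset.sum_congr rfl fun y _ => int_pv_ind hQ0 ε z.1 y]
    rw [Finset.sum_erase_eq_sub (Finset.mem_univ z.2), Prod.mk.eta]
  rw [Finset.sum_congr rfl fun z _ => by rw [key z]]
  have split : ∑ z : X × Y, Q z * ((∑ y, gval (lowQ Q C (z.1, y)) (eqQ Q C (z.1, y)) ε)
      - gval (lowQ Q C z) (eqQ Q C z) ε)
      = (∑ z : X × Y, Q z * ∑ y, gval (lowQ Q C (z.1, y)) (eqQ Q C (z.1, y)) ε)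
        - ∑ z : X × Y, Q z * gval (lowQ Q C z) (eqQ Q C z) ε := by
    rw [← Finset.sum_sub_distrib]
    exact Finset.sum_congr rfl fun z _ => by ring
  rw [split,
    sum_head (fun x => ∑ y, gval (lowQ Q C (x, y)) (eqQ Q C (x, y)) ε),
    ← sum_margX (H := fun w => gval (lowQ Q C w) (eqQ Q C w) ε)]
  rw [Nval, Uval]

/-! ### grouping by conformity value -/

noncomputable def Lf (Q C : X × Y → ℝ) (a : ℝ) : ℝ :=
  ∑ z ∈ Finset.univ.filter (fun z => C z < a), Q z
noncomputable def Mf (Q C : X × Y → ℝ) (a : ℝ) : ℝ :=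
  ∑ z ∈ Finset.univ.filter (fun z => C z = a), Q z

lemma regroup (p : ℝ → Prop) [DecidablePred p] :
    ∑ b ∈ (Finset.univ.image C).filter p, Mf Q C b
      = ∑ z ∈ Finset.univ.filter (fun z => p (C z)), Q z := by
  have step1 : ∀ b : ℝ, (if p b then Mf Q C b else 0)
      = ∑ z : X × Y, if C z = b then (if p b then Q z else 0) else 0 := by
    intro b
    split_ifs with h
    · rw [Mf, Finset.sum_filter]
    · symm
      apply Finset.sum_eq_zero
      intro z _
      simp [h]
  rw [Finset.sum_filter, Finset.sum_congr rfl fun b _ => step1 b, Finset.sum_comm,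
    Finset.sum_filter]
  apply Finset.sum_congr rfl
  intro z _
  rw [Finset.sum_ite_eq, if_pos (Finset.mem_image_of_mem C (Finset.mem_univ z))]

lemma hlow_eq {z : X × Y} {a : ℝ} (hz : C z = a) : lowQ Q C z = Lf Q C a := by
  rw [lowQ, Lf, Finset.sum_filter]
  exact Finset.sum_congr rfl fun z' _ => by rw [hz]

lemma heq_eq {z : X × Y} {a : ℝ} (hz : C z = a) : eqQ Q C z = Mf Q C a := by
  rw [eqQ, Mf, Finset.sum_filter]
  exact Finset.sum_congr rfl fun z' _ => by rw [hz]

lemma hLfMf (a : ℝ) : Lf Q C a + Mf Q C a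
    = ∑ z ∈ Finset.univ.filter (fun z => C z ≤ a), Q z := by
  rw [Lf, Mf, Finset.sum_filter, Finset.sum_filter, Finset.sum_filter,
    ← Finset.sum_add_distrib]
  apply Finset.sum_congr rfl
  intro z _
  rcases lt_trichotomy (C z) a with h | h | h
  · rw [if_pos h, if_neg (ne_of_lt h), if_pos (le_of_lt h), add_zero]
  · rw [if_neg (by rw [h]; exact lt_irrefl _), if_pos h, if_pos (le_of_eq h), zero_add]
  · rw [if_neg (asymm h), if_neg (ne_of_gt h), if_neg (not_le.2 h), add_zero]

lemma Uval_eq (hQ0 : ∀ z, 0 ≤ Q z) (hQ1 : ∑ z : X × Y, Q z = 1) {ε : ℝ}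
    (hε0 : 0 < ε) (hε1 : ε < 1) : Uval Q C ε = 1 - ε := by
  classical
  have hMf0 : ∀ a, 0 ≤ Mf Q C a := fun a => Finset.sum_nonneg fun z _ => hQ0 z
  have grp0 : Uval Q C ε = ∑ a ∈ Finset.univ.image C,
      ∑ z ∈ Finset.univ.filter (fun z => C z = a),
        (Q z * gval (lowQ Q C z) (eqQ Q C z) ε) :=
    (Finset.sum_fiberwise_of_maps_to
      (fun z _ => Finset.mem_image_of_mem C (Finset.mem_univ z)) _).symm
  have grp1 : ∀ a : ℝ, ∑ z ∈ Finset.univ.filter (fun z => C z = a),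
      (Q z * gval (lowQ Q C z) (eqQ Q C z) ε) = Mf Q C a * gval (Lf Q C a) (Mf Q C a) ε := by
    intro a
    rw [show (∑ z ∈ Finset.univ.filter (fun z => C z = a),
        (Q z * gval (lowQ Q C z) (eqQ Q C z) ε))
        = ∑ z ∈ Finset.univ.filter (fun z => C z = a),
          (Q z * gval (Lf Q C a) (Mf Q C a) ε) from
      Finset.sum_congr rfl fun z hz => by
        rw [hlow_eq (Finset.mem_filter.1 hz).2, heq_eq (Finset.mem_filter.1 hz).2]]
    rw [← Finset.sum_mul, Mf]
  have tosum : ∀ a : ℝ, Mf Q C a * gval (Lf Q C a) (Mf Q C a) ε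
      = (fun t => max (t - ε) 0) (∑ b ∈ (Finset.univ.image C).filter (· ≤ a), Mf Q C b)
        - (fun t => max (t - ε) 0) (∑ b ∈ (Finset.univ.image C).filter (· < a), Mf Q C b) := by
    intro a
    have h1 : ∑ b ∈ (Finset.univ.image C).filter (· ≤ a), Mf Q C b = Lf Q C a + Mf Q C a := by
      rw [regroup (· ≤ a), hLfMf]
    have h2 : ∑ b ∈ (Finset.univ.image C).filter (· < a), Mf Q C b = Lf Q C a := by
      rw [regroup (· < a), Lf]
    rw [h1, h2]
    exact gval_mul _ _ _ (hMf0 a)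
  have htot : ∑ b ∈ Finset.univ.image C, Mf Q C b = 1 := by
    rw [← hQ1]
    exact Finset.sum_fiberwise_of_maps_to
      (fun z _ => Finset.mem_image_of_mem C (Finset.mem_univ z)) Q
  rw [grp0, Finset.sum_congr rfl fun a _ => grp1 a,
    Finset.sum_congr rfl fun a _ => tosum a,
    tele (fun t => max (t - ε) 0) (Mf Q C) (Finset.univ.image C), htot]
  rw [max_eq_left (by linarith : (0:ℝ) ≤ 1 - ε),
    max_eq_right (by linarith : (0:ℝ) - ε ≤ 0), sub_zero]

/-! ### rearrangement: Sval is minimised exactly by refinements of condQ -/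

noncomputable def mpair (Q : X × Y → ℝ) (z w : X × Y) : ℝ :=
  min (margX Q w.1 * Q z) (margX Q z.1 * Q w)

noncomputable def kpair (Q C : X × Y → ℝ) (z w : X × Y) : ℝ :=
  margX Q w.1 * (Q z * kfun (C z) (C w)) + margX Q z.1 * (Q w * kfun (C w) (C z))

lemma two_Sval : 2 * Sval Q C = ∑ z : X × Y, ∑ w : X × Y, kpair Q C z w := by
  have hA : Sval Q C = ∑ z : X × Y, ∑ w : X × Y, margX Q w.1 * (Q z * kfun (C z) (C w)) := by
    rw [Sval, Finset.sum_congr rfl fun w _ => by rw [pbar_eq, Finset.mul_sum]]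
    exact Finset.sum_comm
  have hB : Sval Q C = ∑ z : X × Y, ∑ w : X × Y, margX Q z.1 * (Q w * kfun (C w) (C z)) :=
    hA.trans Finset.sum_comm
  have hsum : Sval Q C + Sval Q C
      = (∑ z : X × Y, ∑ w : X × Y, margX Q w.1 * (Q z * kfun (C z) (C w)))
        + ∑ z : X × Y, ∑ w : X × Y, margX Q z.1 * (Q w * kfun (C w) (C z)) :=
    congrArg₂ (· + ·) hA hB
  rw [two_mul, hsum, ← Finset.sum_add_distrib]
  exact Finset.sum_congr rfl fun z _ => by rw [← Finset.sum_add_distrib]; rfl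

lemma cond_lt_iff (hQX : ∀ x, 0 < margX Q x) (z w : X × Y) :
    condQ Q z < condQ Q w ↔ margX Q w.1 * Q z < margX Q z.1 * Q w := by
  rw [condQ, condQ, div_lt_div_iff₀ (hQX z.1) (hQX w.1)]
  constructor <;> intro <;> nlinarith

lemma cond_eq_iff (hQX : ∀ x, 0 < margX Q x) (z w : X × Y) :
    condQ Q z = condQ Q w ↔ margX Q w.1 * Q z = margX Q z.1 * Q w := by
  rw [condQ, condQ, div_eq_div_iff (ne_of_gt (hQX z.1)) (ne_of_gt (hQX w.1))]
  constructor <;> intro <;> nlinarith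

lemma pair_ge (hQ0 : ∀ z, 0 ≤ Q z) (z w : X × Y) : mpair Q z w ≤ kpair Q C z w := by
  have h1 := min_le_left (margX Q w.1 * Q z) (margX Q z.1 * Q w)
  have h2 := min_le_right (margX Q w.1 * Q z) (margX Q z.1 * Q w)
  rw [mpair] at *
  rw [kpair]
  rcases lt_trichotomy (C z) (C w) with h | h | h
  · rw [kfun_lt h, kfun_gt h]; linarith
  · rw [kfun_eq h, kfun_eq h.symm]; linarith
  · rw [kfun_gt h, kfun_lt h]; linarith

lemma pair_eq_of (hQX : ∀ x, 0 < margX Q x) (h : Refines C (condQ Q)) (z w : X × Y) :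
    kpair Q C z w = mpair Q z w := by
  rcases lt_trichotomy (condQ Q z) (condQ Q w) with hc | hc | hc
  · have hk := h z w hc
    have hcross := (cond_lt_iff hQX z w).1 hc
    rw [kpair, kfun_lt hk, kfun_gt hk, mpair, min_eq_left (le_of_lt hcross)]
    ring
  · have hcross := (cond_eq_iff hQX z w).1 hc
    rw [kpair, mpair, ← hcross, min_self]
    rcases lt_trichotomy (C z) (C w) with hk | hk | hk
    · rw [kfun_lt hk, kfun_gt hk]; ring
    · rw [kfun_eq hk, kfun_eq hk.symm]; nlinarith [hcross]
    · rw [kfun_gt hk, kfun_lt hk]; nlinarith [hcross]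
  · have hk := h w z hc
    have hcross := (cond_lt_iff hQX w z).1 hc
    rw [kpair, kfun_gt hk, kfun_lt hk, mpair, min_eq_right (le_of_lt hcross)]
    ring

lemma Sval_ge (hQ0 : ∀ z, 0 ≤ Q z) :
    ∑ z : X × Y, ∑ w : X × Y, mpair Q z w ≤ 2 * Sval Q C := by
  rw [two_Sval]
  exact Finset.sum_le_sum fun z _ => Finset.sum_le_sum fun w _ => pair_ge hQ0 z w

lemma Sval_eq_of_refines (hQX : ∀ x, 0 < margX Q x) (h : Refines C (condQ Q)) :
    2 * Sval Q C = ∑ z : X × Y, ∑ w : X × Y, mpair Q z w := by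
  rw [two_Sval]
  exact Finset.sum_congr rfl fun z _ => Finset.sum_congr rfl fun w _ => pair_eq_of hQX h z w

lemma refines_of_Sval_le (hQ0 : ∀ z, 0 ≤ Q z) (hQX : ∀ x, 0 < margX Q x)
    (hle : 2 * Sval Q C ≤ ∑ z : X × Y, ∑ w : X × Y, mpair Q z w) :
    Refines C (condQ Q) := by
  have key : ∀ z w : X × Y, kpair Q C z w = mpair Q z w := by
    have h0 : ∑ z : X × Y, ∑ w : X × Y, (kpair Q C z w - mpair Q z w) = 0 := by
      rw [Finset.sum_congr rfl fun z (_ : z ∈ Finset.univ) => Finset.sum_sub_distrib _ _,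
        Finset.sum_sub_distrib, ← two_Sval, sub_eq_zero]
      exact le_antisymm hle (Sval_ge hQ0)
    have hnn : ∀ z ∈ (Finset.univ : Finset (X × Y)),
        0 ≤ ∑ w : X × Y, (kpair Q C z w - mpair Q z w) :=
      fun z _ => Finset.sum_nonneg fun w _ => sub_nonneg.2 (pair_ge hQ0 z w)
    intro z w
    have hz := (Finset.sum_eq_zero_iff_of_nonneg hnn).1 h0 z (Finset.mem_univ z)
    have hw := (Finset.sum_eq_zero_iff_of_nonneg
      (fun w _ => sub_nonneg.2 (pair_ge hQ0 z w))).1 hz w (Finset.mem_univ w)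
    linarith [hw]
  intro z w hc
  have hcross := (cond_lt_iff hQX z w).1 hc
  have hkey := key z w
  by_contra hnot
  rcases eq_or_lt_of_le (not_lt.1 hnot) with hk | hk
  · rw [kpair, kfun_eq hk.symm, kfun_eq hk, mpair, min_eq_left (le_of_lt hcross)] at hkey
    nlinarith [hkey]
  · rw [kpair, kfun_gt hk, kfun_lt hk, mpair, min_eq_left (le_of_lt hcross)] at hkey
    nlinarith [hkey]

/-! ### Neyman–Pearson: refinements minimise Nval for every ε -/

lemma condQ_nonneg (hQ0 : ∀ z, 0 ≤ Q z) (hQX : ∀ x, 0 < margX Q x) (z : X × Y) :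
    0 ≤ condQ Q z := div_nonneg (hQ0 z) (hQX z.1).le

lemma np_min (hQ0 : ∀ z, 0 ≤ Q z) (hQ1 : ∑ z : X × Y, Q z = 1)
    (hQX : ∀ x, 0 < margX Q x) {A : X × Y → ℝ} (hA : Refines A (condQ Q))
    (B : X × Y → ℝ) {ε : ℝ} (hε0 : 0 < ε) (hε1 : ε < 1) :
    Nval Q A ε ≤ Nval Q B ε := by
  classical
  set gA : X × Y → ℝ := fun w => gval (lowQ Q A w) (eqQ Q A w) ε with hgA
  set gB : X × Y → ℝ := fun w => gval (lowQ Q B w) (eqQ Q B w) ε with hgB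
  have hgA0 : ∀ w, 0 ≤ gA w := fun w => gval_nonneg _ _ _
  have hgA1 : ∀ w, gA w ≤ 1 := fun w => gval_le_one _ _ _
  have hgB0 : ∀ w, 0 ≤ gB w := fun w => gval_nonneg _ _ _
  have hgB1 : ∀ w, gB w ≤ 1 := fun w => gval_le_one _ _ _
  have hUA : Uval Q A ε = 1 - ε := Uval_eq hQ0 hQ1 hε0 hε1
  have hUB : Uval Q B ε = 1 - ε := Uval_eq hQ0 hQ1 hε0 hε1
  -- the set of w with positive gA
  have hS : (Finset.univ.filter (fun w => 0 < gA w)).Nonempty := by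
    by_contra hne
    rw [Finset.not_nonempty_iff_eq_empty, Finset.filter_eq_empty_iff] at hne
    have : Uval Q A ε = 0 := Finset.sum_eq_zero fun w _ => by
      have h1 : gA w = 0 := le_antisymm (not_lt.1 (hne (Finset.mem_univ w))) (hgA0 w)
      rw [show gval (lowQ Q A w) (eqQ Q A w) ε = gA w from rfl, h1, mul_zero]
    rw [hUA] at this; linarith
  obtain ⟨w0, hw0mem, hw0min⟩ := Finset.exists_min_image _ (condQ Q) hS
  have hw0pos : 0 < gA w0 := (Finset.mem_filter.1 hw0mem).2
  set t : ℝ := condQ Q w0 with ht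
  -- t is positive
  have htpos : 0 < t := by
    have hbound : ε < lowQ Q A w0 + eqQ Q A w0 := gval_pos _ _ _ (eqQ_nonneg hQ0 _) hw0pos
    have hle : lowQ Q A w0 + eqQ Q A w0
        ≤ ∑ z : X × Y, (if condQ Q z ≤ t then Q z else 0) := by
      rw [low_add_eq]
      apply Finset.sum_le_sum
      intro z _
      split_ifs with h1 h2
      · exact le_refl _
      · exfalso
        exact absurd (hA w0 z (not_le.1 h2)) (not_lt.2 h1)
      · exact hQ0 z
      · exact le_refl _
    by_contra hc
    push_neg at hc
    have hzero : ∑ z : X × Y, (if condQ Q z ≤ t then Q z else 0) = 0 := by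
      apply Finset.sum_eq_zero
      intro z _
      split_ifs with h1
      · have h2 : condQ Q z = 0 := le_antisymm (by linarith [condQ_nonneg hQ0 hQX z])
          (condQ_nonneg hQ0 hQX z)
        rw [condQ, div_eq_zero_iff] at h2
        rcases h2 with h2 | h2
        · exact h2
        · exact absurd h2 (ne_of_gt (hQX z.1))
      · rfl
    rw [hzero] at hle
    linarith
  -- pointwise NP inequality
  have hpoint : ∀ w : X × Y, (gB w - gA w) * (Q w - t * margX Q w.1) ≤ 0 := by
    intro w
    have hfac : Q w - t * margX Q w.1 = (condQ Q w - t) * margX Q w.1 := by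
      rw [condQ, sub_mul, div_mul_cancel₀ _ (ne_of_gt (hQX w.1))]
    rcases lt_trichotomy (condQ Q w) t with hw | hw | hw
    · have hgzero : gA w = 0 := by
        have : w ∉ Finset.univ.filter (fun w => 0 < gA w) := fun hmem =>
          absurd (hw0min w hmem) (not_le.2 hw)
        have := fun hpos : 0 < gA w =>
          this (Finset.mem_filter.2 ⟨Finset.mem_univ w, hpos⟩)
        exact le_antisymm (not_lt.1 this) (hgA0 w)
      rw [hgzero, sub_zero, hfac]
      apply mul_nonpos_of_nonneg_of_nonpos (hgB0 w)
      apply mul_nonpos_of_nonpos_of_nonneg (by linarith) (hQX w.1).le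
    · rw [hfac, hw, sub_self, zero_mul, mul_zero]
    · have hgone : gA w = 1 := by
        by_contra hne1
        have hlt1 : gA w < 1 := lt_of_le_of_ne (hgA1 w) hne1
        have hlow : lowQ Q A w ≤ ε := gval_lt_one _ _ _ (eqQ_nonneg hQ0 _) hlt1
        have hAlt : A w0 < A w := hA w0 w hw
        have : lowQ Q A w0 + eqQ Q A w0 ≤ lowQ Q A w := leQ_mono hQ0 hAlt
        have : gA w0 = 0 := gval_zero_of _ _ _ (eqQ_nonneg hQ0 _) (by linarith)
        linarith [hw0pos]
      rw [hgone, hfac]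
      apply mul_nonpos_of_nonpos_of_nonneg (by linarith [hgB1 w])
      apply mul_nonneg (by linarith) (hQX w.1).le
  have hsum : ∑ w : X × Y, (gB w - gA w) * (Q w - t * margX Q w.1) ≤ 0 :=
    Finset.sum_nonpos fun w _ => hpoint w
  have hexpand : ∑ w : X × Y, (gB w - gA w) * (Q w - t * margX Q w.1)
      = (Uval Q B ε - Uval Q A ε) - t * (Nval Q B ε - Nval Q A ε) := by
    rw [Uval, Uval, Nval, Nval, ← Finset.sum_sub_distrib, ← Finset.sum_sub_distrib,
      Finset.mul_sum, ← Finset.sum_sub_distrib]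
    exact Finset.sum_congr rfl fun w _ => by rw [hgA, hgB]; ring
  rw [hexpand, hUA, hUB] at hsum
  nlinarith [hsum, htpos]

/-! ### integrating Nval over ε gives Sval -/

lemma margX_nonneg (hQ0 : ∀ z, 0 ≤ Q z) (x : X) : 0 ≤ margX Q x :=
  Finset.sum_nonneg fun y _ => hQ0 (x, y)

lemma Nval_anti (hQ0 : ∀ z, 0 ≤ Q z) : Antitone (Nval Q C) := by
  intro a b hab
  apply Finset.sum_le_sum
  intro w _
  exact mul_le_mul_of_nonneg_left
    (gval_anti _ _ (eqQ_nonneg hQ0 w) hab) (margX_nonneg hQ0 w.1)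

lemma Nval_integral (hQ0 : ∀ z, 0 ≤ Q z) (hQ1 : ∑ z : X × Y, Q z = 1) :
    ∫ ε in (0:ℝ)..1, Nval Q C ε = Sval Q C := by
  rw [show (fun ε => Nval Q C ε)
      = fun ε => ∑ w : X × Y, margX Q w.1 * gval (lowQ Q C w) (eqQ Q C w) ε from rfl]
  rw [intervalIntegral.integral_finset_sum (fun w _ =>
    ((gval_anti (lowQ Q C w) (eqQ Q C w) (eqQ_nonneg hQ0 w)).intervalIntegrable).const_mul _)]
  apply Finset.sum_congr rfl
  intro w _
  rw [intervalIntegral.integral_const_mul,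
    gval_integral _ _ (lowQ_nonneg hQ0 w) (eqQ_nonneg hQ0 w) (low_add_le_one hQ0 hQ1 w)]

end Proofs


/-- **Theorem 1 (Vovk et al.):** `O(S) = O(OF) = O(N) = O(OE) = R(CP)`. -/
theorem stmt0 {X Y : Type*} [Fintype X] [Fintype Y] [DecidableEq Y] [Nonempty X]
    (hY : 2 ≤ Fintype.card Y) (Q : X × Y → ℝ) (hQ0 : ∀ z, 0 ≤ Q z)
    (hQ1 : ∑ z : X × Y, Q z = 1) (hQX : ∀ x, 0 < margX Q x) (A : X × Y → ℝ) :
    (SOpt Q A ↔ OFOpt Q A) ∧ (OFOpt Q A ↔ NOpt Q A) ∧ (NOpt Q A ↔ OEOpt Q A) ∧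
      (OEOpt Q A ↔ Refines A (condQ Q)) := by
  classical
  have hRcond : Refines (condQ Q) (condQ Q) := fun _ _ h => h
  have hSv_iff : (∀ B : X × Y → ℝ, Sval Q A ≤ Sval Q B) ↔ Refines A (condQ Q) := by
    constructor
    · intro h
      apply refines_of_Sval_le hQ0 hQX
      have h1 := h (condQ Q)
      have h2 := Sval_eq_of_refines hQX hRcond
      linarith
    · intro h B
      have h1 := Sval_eq_of_refines hQX h
      have h2 := Sval_ge hQ0 (C := B)
      linarith
  have hS_iff : SOpt Q A ↔ (∀ B : X × Y → ℝ, Sval Q A ≤ Sval Q B) := by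
    constructor
    · intro h B; have := h B; rwa [expXT_S, expXT_S] at this
    · intro h B; rw [expXT_S, expXT_S]; exact h B
  have hN_vals : NOpt Q A ↔
      (∀ B : X × Y → ℝ, ∀ ε ∈ Set.Ioo (0:ℝ) 1, Nval Q A ε ≤ Nval Q B ε) := by
    constructor
    · intro h B ε hε; have := h B ε hε; rwa [expXT_N hQ0, expXT_N hQ0] at this
    · intro h B ε hε; rw [expXT_N hQ0, expXT_N hQ0]; exact h B ε hε
  have hSR : SOpt Q A ↔ Refines A (condQ Q) := hS_iff.trans hSv_iff
  have hN_iff : NOpt Q A ↔ Refines A (condQ Q) := by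
    rw [hN_vals]
    constructor
    · intro h
      apply hSv_iff.1
      intro B
      rw [← Nval_integral hQ0 hQ1 (C := A), ← Nval_integral hQ0 hQ1 (C := B)]
      apply intervalIntegral.integral_mono_ae_restrict (by norm_num : (0:ℝ) ≤ 1)
        ((Nval_anti hQ0).intervalIntegrable) ((Nval_anti hQ0).intervalIntegrable)
      have hnull : MeasureTheory.volume ({0, 1} : Set ℝ) = 0 :=
        Set.Finite.measure_zero ((Set.finite_singleton 1).insert 0) _
      refine (MeasureTheory.ae_restrict_iff' measurableSet_Icc).mpr ?_
      rw [MeasureTheory.ae_iff]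
      apply MeasureTheory.measure_mono_null ?_ hnull
      intro ε hε
      simp only [Set.mem_setOf_eq, _root_.not_imp] at hε
      obtain ⟨h1, h2⟩ := hε
      have h3 : ε ∉ Set.Ioo (0:ℝ) 1 := fun hIoo => h2 (h B ε hIoo)
      simp only [Set.mem_Ioo, not_and_or, not_lt] at h3
      simp only [Set.mem_insert_iff, Set.mem_singleton_iff]
      rcases h3 with h3 | h3
      · exact Or.inl (le_antisymm h3 h1.1)
      · exact Or.inr (le_antisymm h1.2 h3)
    · intro h B ε hε
      exact np_min hQ0 hQ1 hQX h B hε.1 hε.2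
  have hOF_iff : OFOpt Q A ↔ SOpt Q A := by
    constructor
    · intro h B
      rw [expXT_S, expXT_S]
      have := h B
      rw [expZT_OF hQ1, expZT_OF hQ1] at this
      linarith
    · intro h B
      rw [expZT_OF hQ1, expZT_OF hQ1]
      have := h B
      rw [expXT_S, expXT_S] at this
      linarith
  have hOE_iff : OEOpt Q A ↔ NOpt Q A := by
    rw [hN_vals]
    constructor
    · intro h B ε hε
      have := h B ε hε
      rw [expZT_OE hQ0, expZT_OE hQ0, Uval_eq hQ0 hQ1 hε.1 hε.2,
        Uval_eq hQ0 hQ1 hε.1 hε.2] at this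
      linarith
    · intro h B ε hε
      rw [expZT_OE hQ0, expZT_OE hQ0, Uval_eq hQ0 hQ1 hε.1 hε.2,
        Uval_eq hQ0 hQ1 hε.1 hε.2]
      linarith [h B ε hε]
  refine ⟨hOF_iff.symm, hOF_iff.trans (hSR.trans hN_iff.symm), hOE_iff.symm,
    hOE_iff.trans hN_iff⟩
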